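/- arXiv:1512.05110 — 2 statements merged into one kernel-verified Lean document; each statement's English description precedes it below -/
import Mathlib

section
/- Let N be a positive integer, E a nonempty subset of {1,...,N}, ε ≥ 0, and p_1,...,p_N nonnegative reals with p_i ≤ exp(ε)·p_j for all i,j, and assume Σ_{i=1}^N p_i > 0. Then the equivalence-class average (1/|E|)·Σ_{i∈E} p_i is at most t times the global average (1/N)·Σ_{i=1}^N p_i, where t = (N/|E|)·(1 + ((N−|E|)/|E|)·exp(−ε))^{−1}. -/
open Finset Real

theorem stmt_1 (N : ℕ) (hN : 0 < N) (E : Finset (Fin N)) (hE : E.Nonempty)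
    (ε : ℝ) (hε : 0 ≤ ε) (p : Fin N → ℝ) (hp : ∀ i, 0 ≤ p i)
    (hdp : ∀ i j, p i ≤ Real.exp ε * p j)
    (hpos : 0 < ∑ i, p i) :
    (1 / (E.card : ℝ)) * ∑ i ∈ E, p i ≤
      ((N : ℝ) / E.card) * (1 + (((N : ℝ) - E.card) / E.card) * Real.exp (-ε))⁻¹ *
        ((1 / (N : ℝ)) * ∑ i, p i) := by
  have hk : (0:ℝ) < E.card := by exact_mod_cast Finset.card_pos.mpr hE
  have hkN : (E.card : ℝ) ≤ N := by
    have := Finset.card_le_univ E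
    simp at this
    exact_mod_cast this
  have hN' : (0:ℝ) < N := by exact_mod_cast hN
  have hSE : 0 ≤ ∑ i ∈ E, p i := Finset.sum_nonneg fun i _ => hp i
  have hexp : (0:ℝ) < Real.exp (-ε) := Real.exp_pos _
  have hcardc : (Eᶜ.card : ℝ) = (N : ℝ) - E.card := by
    rw [Finset.card_compl]
    have := Finset.card_le_univ E
    simp at this ⊢
    push_cast [Nat.cast_sub this]
    ring
  have key : Real.exp (-ε) * (∑ i ∈ E, p i) * ((N:ℝ) - E.card)
      ≤ (E.card : ℝ) * ∑ j ∈ Eᶜ, p j := by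
    have h1 : ∀ j ∈ Eᶜ, Real.exp (-ε) * ∑ i ∈ E, p i ≤ (E.card:ℝ) * p j := by
      intro j _
      rw [Finset.mul_sum]
      calc ∑ i ∈ E, Real.exp (-ε) * p i ≤ ∑ i ∈ E, p j := by
            apply Finset.sum_le_sum
            intro i _
            have h := hdp i j
            have h2 := mul_le_mul_of_nonneg_left h hexp.le
            rwa [← mul_assoc, ← Real.exp_add, neg_add_cancel, Real.exp_zero, one_mul] at h2
        _ = (E.card:ℝ) * p j := by rw [Finset.sum_const, nsmul_eq_mul]
    calc Real.exp (-ε) * (∑ i ∈ E, p i) * ((N:ℝ) - E.card)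
        = ∑ _j ∈ Eᶜ, Real.exp (-ε) * ∑ i ∈ E, p i := by
          rw [Finset.sum_const, nsmul_eq_mul, hcardc]; ring
      _ ≤ ∑ j ∈ Eᶜ, (E.card:ℝ) * p j := Finset.sum_le_sum h1
      _ = (E.card:ℝ) * ∑ j ∈ Eᶜ, p j := (Finset.mul_sum _ _ _).symm
  have hS : ∑ i, p i = ∑ i ∈ E, p i + ∑ i ∈ Eᶜ, p i := (Finset.sum_add_sum_compl E p).symm
  have hD : 0 < 1 + (((N:ℝ) - E.card)/E.card) * Real.exp (-ε) := by
    have h1 : 0 ≤ ((N:ℝ) - E.card) := sub_nonneg.mpr hkN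
    have h2 : 0 ≤ (((N:ℝ) - E.card)/E.card) * Real.exp (-ε) := by positivity
    linarith
  rw [hS]
  have main : ∑ i ∈ E, p i ≤ (∑ i ∈ E, p i + ∑ i ∈ Eᶜ, p i) /
      (1 + (((N:ℝ) - E.card)/E.card) * Real.exp (-ε)) := by
    rw [le_div_iff₀ hD]
    have hdiv : Real.exp (-ε) * (∑ i ∈ E, p i) * ((N:ℝ) - E.card) / E.card
        ≤ ∑ j ∈ Eᶜ, p j := by
      rw [div_le_iff₀ hk]
      nlinarith [key]
    have heq : (∑ i ∈ E, p i) * (1 + (((N:ℝ) - E.card)/E.card) * Real.exp (-ε))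
        = ∑ i ∈ E, p i + Real.exp (-ε) * (∑ i ∈ E, p i) * ((N:ℝ) - E.card) / E.card := by
      field_simp
    rw [heq]
    linarith [hdiv]
  have hR : (N:ℝ)/E.card * (1 + (((N:ℝ) - E.card)/E.card) * Real.exp (-ε))⁻¹ *
      (1/(N:ℝ) * (∑ i ∈ E, p i + ∑ i ∈ Eᶜ, p i))
      = 1/(E.card:ℝ) * ((∑ i ∈ E, p i + ∑ i ∈ Eᶜ, p i) /
        (1 + (((N:ℝ) - E.card)/E.card) * Real.exp (-ε))) := by
    field_simp
  rw [hR]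
  exact mul_le_mul_of_nonneg_left main (by positivity)
end

section
/- Let N be a positive integer, E a nonempty subset of {1,...,N}, ε ≥ 0, and p_1,...,p_N nonnegative reals with p_i ≤ exp(ε)·p_j for all i,j, with Σ_{i∈E} p_i > 0. Then the global average (1/N)·Σ_{i=1}^N p_i is at most t times the within-class average (1/|E|)·Σ_{i∈E} p_i, where t = (|E|/N)·(1 + ((N−|E|)/|E|)·exp(ε)). -/
open Finset Real

theorem stmt_2 (N : ℕ) (hN : 0 < N) (E : Finset (Fin N)) (hE : E.Nonempty)
    (ε : ℝ) (hε : 0 ≤ ε) (p : Fin N → ℝ) (hp : ∀ i, 0 ≤ p i)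
    (hdp : ∀ i j, p i ≤ Real.exp ε * p j)
    (hpos : 0 < ∑ i ∈ E, p i) :
    (1 / (N : ℝ)) * ∑ i, p i ≤
      ((E.card : ℝ) / N) * (1 + (((N : ℝ) - E.card) / E.card) * Real.exp ε) *
        ((1 / (E.card : ℝ)) * ∑ i ∈ E, p i) := by
  have hk : (0:ℝ) < E.card := by exact_mod_cast Finset.card_pos.mpr hE
  have hNpos : (0:ℝ) < N := by exact_mod_cast hN
  set S := ∑ i ∈ E, p i with hS
  have key : ∀ i, (E.card : ℝ) * p i ≤ Real.exp ε * S := by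
    intro i
    calc (E.card : ℝ) * p i = ∑ _j ∈ E, p i := by
          rw [Finset.sum_const, nsmul_eq_mul]
      _ ≤ ∑ j ∈ E, Real.exp ε * p j := Finset.sum_le_sum fun j _ => hdp i j
      _ = Real.exp ε * S := by rw [Finset.mul_sum]
  have hC : (E.card : ℝ) * ∑ i ∈ Eᶜ, p i ≤ (Eᶜ.card : ℝ) * (Real.exp ε * S) := by
    calc (E.card : ℝ) * ∑ i ∈ Eᶜ, p i = ∑ i ∈ Eᶜ, (E.card : ℝ) * p i := by
          rw [Finset.mul_sum]
      _ ≤ ∑ _i ∈ Eᶜ, Real.exp ε * S := Finset.sum_le_sum fun i _ => key i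
      _ = (Eᶜ.card : ℝ) * (Real.exp ε * S) := by
          rw [Finset.sum_const, nsmul_eq_mul]
  have hsplit : ∑ i, p i = S + ∑ i ∈ Eᶜ, p i := by
    rw [hS, ← Finset.sum_add_sum_compl E p]
  have hcard : (Eᶜ.card : ℝ) = (N : ℝ) - E.card := by
    have hle : E.card ≤ N := by
      simpa using Finset.card_le_card (Finset.subset_univ E)
    rw [Finset.card_compl E, Fintype.card_fin, Nat.cast_sub hle]
  rw [hsplit]
  rw [hcard] at hC
  have hkne : (E.card : ℝ) ≠ 0 := ne_of_gt hk
  have hNne : (N : ℝ) ≠ 0 := ne_of_gt hNpos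
  field_simp
  ring_nf
  nlinarith [hC, hk, hNpos, Real.exp_pos ε, mul_le_mul_of_nonneg_left hC (le_of_lt hNpos)]
end
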